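/- Let F be a field of characteristic zero and let G be any group. Then the group algebra F[G] is a centrally essential ring if and only if F[G] is commutative (equivalently, if and only if G is commutative). -/

import Mathlib

open MonoidAlgebra Finsupp

/-- A ring `R` is *centrally essential* if for every nonzero `r ∈ R` there is a central
element `c` such that `c * r` is a nonzero central element. -/
def IsCentrallyEssential (R : Type*) [Ring R] : Prop :=
  ∀ r : R, r ≠ 0 → ∃ c ∈ Subring.center R, c * r ≠ 0 ∧ c * r ∈ Subring.center R

section CentralIff
variable {k : Type*} [CommRing k] {G : Type*} [Group G]

lemma central_iff (z : MonoidAlgebra k G) :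
    z ∈ Subring.center (MonoidAlgebra k G) ↔ ∀ h g : G, z.coeff (h * g * h⁻¹) = z.coeff g := by
  constructor
  · intro hz h g
    have hc := Subring.mem_center_iff.mp hz (MonoidAlgebra.single h (1 : k))
    have := congrArg (fun u : MonoidAlgebra k G => u.coeff (h * g)) hc
    simp only [MonoidAlgebra.single_mul_apply, MonoidAlgebra.mul_single_apply,
      one_mul, mul_one, inv_mul_cancel_left] at this
    exact this.symm
  · intro hinv
    rw [Subring.mem_center_iff]
    intro y
    induction y using MonoidAlgebra.induction_linear with
    | zero => simp
    | add f g hf hg => rw [add_mul, mul_add, hf, hg]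
    | single h r =>
      ext x
      rw [MonoidAlgebra.single_mul_apply, MonoidAlgebra.mul_single_apply, mul_comm]
      congr 1
      have := hinv h⁻¹ (x * h⁻¹)
      rw [show h⁻¹ * (x * h⁻¹) * h⁻¹⁻¹ = h⁻¹ * x by group] at this
      exact this
end CentralIff

section MapRange
variable {k k' : Type*} [Semiring k] [Semiring k'] {G : Type*} [Monoid G]

/-- coefficient map on monoid algebras -/
noncomputable def mapCoeff (φ : k →+* k') (f : MonoidAlgebra k G) : MonoidAlgebra k' G :=
  .ofCoeff (Finsupp.mapRange ⇑φ (map_zero φ) f.coeff)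

lemma mapCoeff_apply (φ : k →+* k') (f : MonoidAlgebra k G) (g : G) :
    (mapCoeff φ f).coeff g = φ (f.coeff g) := rfl

lemma mapCoeff_zero (φ : k →+* k') : mapCoeff (G := G) φ 0 = 0 := by
  ext g; simp [mapCoeff_apply]

lemma mapCoeff_injective (φ : k →+* k') (hφ : Function.Injective ⇑φ) :
    Function.Injective (mapCoeff (G := G) φ) :=
  fun a b h => MonoidAlgebra.coeff_injective
    (Finsupp.mapRange_injective ⇑φ (map_zero φ) hφ (congrArg MonoidAlgebra.coeff h))

lemma mapCoeff_add (φ : k →+* k') (u v : MonoidAlgebra k G) :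
    mapCoeff φ (u + v) = mapCoeff φ u + mapCoeff φ v := by
  ext g; simp [mapCoeff_apply, MonoidAlgebra.coeff_add]

lemma mapCoeff_single (φ : k →+* k') (a : G) (r : k) :
    mapCoeff φ (MonoidAlgebra.single a r) = MonoidAlgebra.single a (φ r) := by
  unfold mapCoeff; rw [MonoidAlgebra.coeff_single, Finsupp.mapRange_single]; rfl

lemma mapCoeff_mul (φ : k →+* k') (f g : MonoidAlgebra k G) :
    mapCoeff φ (f * g) = mapCoeff φ f * mapCoeff φ g := by
  induction f using MonoidAlgebra.induction_linear with
  | zero => simp [mapCoeff_zero]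
  | add f₁ f₂ h1 h2 => rw [add_mul, mapCoeff_add, h1, h2, mapCoeff_add, add_mul]
  | single a r =>
    induction g using MonoidAlgebra.induction_linear with
    | zero => simp [mapCoeff_zero]
    | add g₁ g₂ h1 h2 => rw [mul_add, mapCoeff_add, h1, h2, mapCoeff_add, mul_add]
    | single b s =>
      rw [MonoidAlgebra.single_mul_single, mapCoeff_single, mapCoeff_single,
        mapCoeff_single, map_mul, MonoidAlgebra.single_mul_single]
end MapRange

section Adjoint
variable {G : Type*} [Group G]

/-- the conjugate-transpose on the complex group algebra -/
noncomputable def adj (z : MonoidAlgebra ℂ G) : MonoidAlgebra ℂ G :=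
  .ofCoeff (Finsupp.equivMapDomain (Equiv.inv G)
    (Finsupp.mapRange (starRingEnd ℂ) (map_zero _) z.coeff))

lemma adj_apply (z : MonoidAlgebra ℂ G) (g : G) :
    (adj z).coeff g = starRingEnd ℂ (z.coeff g⁻¹) := by
  simp [adj, Finsupp.equivMapDomain_apply]

lemma adj_single (a : G) (r : ℂ) :
    adj (MonoidAlgebra.single a r) = MonoidAlgebra.single a⁻¹ (starRingEnd ℂ r) := by
  classical
  ext g
  rw [adj_apply, MonoidAlgebra.single_apply, MonoidAlgebra.single_apply]
  by_cases h : a = g⁻¹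
  · rw [if_pos h, if_pos (by rw [h, inv_inv])]
  · rw [if_neg h, if_neg (fun hh => h (by rw [← hh, inv_inv])), map_zero]

lemma adj_add (u v : MonoidAlgebra ℂ G) : adj (u + v) = adj u + adj v := by
  ext g
  rw [adj_apply, MonoidAlgebra.coeff_add, Finsupp.add_apply, MonoidAlgebra.coeff_add,
    Finsupp.add_apply, adj_apply, adj_apply, map_add]

lemma adj_zero : adj (0 : MonoidAlgebra ℂ G) = 0 := by
  ext g; simp [adj_apply]

lemma adj_mul (u v : MonoidAlgebra ℂ G) : adj (u * v) = adj v * adj u := by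
  induction u using MonoidAlgebra.induction_linear with
  | zero => simp [adj_zero]
  | add f₁ f₂ h1 h2 => rw [add_mul, adj_add, h1, h2, adj_add, mul_add]
  | single a r =>
    induction v using MonoidAlgebra.induction_linear with
    | zero => simp [adj_zero]
    | add g₁ g₂ h1 h2 => rw [mul_add, adj_add, h1, h2, adj_add, add_mul]
    | single b s =>
      rw [MonoidAlgebra.single_mul_single, adj_single, adj_single, adj_single,
        MonoidAlgebra.single_mul_single, mul_inv_rev, map_mul, mul_comm]

lemma adj_adj (u : MonoidAlgebra ℂ G) : adj (adj u) = u := by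
  ext g; simp [adj_apply]

lemma tr_mul_adj (u : MonoidAlgebra ℂ G) (hu : u ≠ 0) : (u * adj u).coeff 1 ≠ 0 := by
  rw [MonoidAlgebra.coeff_mul_apply_left]
  have : (u.coeff.sum fun a b => b * (adj u).coeff (a⁻¹ * 1)) =
      ∑ a ∈ u.coeff.support, ((Complex.normSq (u.coeff a) : ℝ) : ℂ) := by
    rw [Finsupp.sum]
    refine Finset.sum_congr rfl fun a _ => ?_
    rw [adj_apply, mul_one]
    simp [Complex.mul_conj]
  rw [this, ← Complex.ofReal_sum]
  rw [ne_eq, Complex.ofReal_eq_zero]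
  have hpos : 0 < ∑ a ∈ u.coeff.support, Complex.normSq (u.coeff a) := by
    refine Finset.sum_pos (fun a ha => ?_)
      (Finsupp.support_nonempty_iff.mpr fun h => hu (MonoidAlgebra.coeff_injective h))
    exact Complex.normSq_pos.mpr (Finsupp.mem_support_iff.mp ha)
  exact ne_of_gt hpos

lemma complex_central_sq (z : MonoidAlgebra ℂ G)
    (hz : z ∈ Subring.center (MonoidAlgebra ℂ G)) (h2 : z * z = 0) : z = 0 := by
  by_contra hne
  have hcomm : adj z * z = z * adj z := Subring.mem_center_iff.mp hz (adj z)
  set w := z * adj z with hw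
  have hw0 : w ≠ 0 := by
    intro h
    exact tr_mul_adj z hne (by rw [← hw, h]; simp)
  have hadjw : adj w = w := by
    rw [hw, adj_mul, adj_adj]
  have hww : w * w = 0 := by
    calc w * w = z * (adj z * z) * adj z := by
          rw [hw, mul_assoc, mul_assoc, ← mul_assoc (adj z) z (adj z), ← mul_assoc z]
    _ = z * (z * adj z) * adj z := by rw [hcomm, hw]
    _ = (z * z) * (adj z * adj z) := by
          rw [mul_assoc, mul_assoc, mul_assoc]
    _ = 0 := by rw [h2, zero_mul]
  have := tr_mul_adj w hw0
  rw [hadjw, hww] at this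
  simp at this

end Adjoint

section CharZero
variable {F : Type*} [Field F] [CharZero F] {G : Type*} [Group G]

lemma central_sq_eq_zero (t : MonoidAlgebra F G)
    (ht : t ∈ Subring.center (MonoidAlgebra F G)) (h2 : t * t = 0) : t = 0 := by
  classical
  by_contra hne
  obtain ⟨g₀, hg₀⟩ := Finsupp.support_nonempty_iff.mpr fun h => hne (MonoidAlgebra.coeff_injective h)
  have hg₀' : t.coeff g₀ ≠ 0 := Finsupp.mem_support_iff.mp hg₀
  -- the finitely generated coefficient algebra
  set fs : Finset F := insert (t.coeff g₀)⁻¹ (t.coeff.support.image ⇑t.coeff) with hfs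
  set R₀ : Subalgebra ℚ F := Algebra.adjoin ℚ (↑fs : Set F) with hR₀
  have hmem : ∀ g : G, t.coeff g ∈ R₀ := by
    intro g
    rcases eq_or_ne (t.coeff g) 0 with h | h
    · rw [h]; exact zero_mem _
    · exact Algebra.subset_adjoin (Finset.mem_coe.mpr (Finset.mem_insert_of_mem
        (Finset.mem_image_of_mem ⇑t.coeff (Finsupp.mem_support_iff.mpr h))))
  have hinvmem : (t.coeff g₀)⁻¹ ∈ R₀ :=
    Algebra.subset_adjoin (Finset.mem_coe.mpr (Finset.mem_insert_self _ _))
  haveI : Algebra.FiniteType ℚ R₀ :=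
    (Subalgebra.fg_iff_finiteType R₀).mp (Subalgebra.fg_adjoin_finset fs)
  -- a maximal ideal and the residue field
  obtain ⟨m, hm⟩ := Ideal.exists_maximal R₀
  haveI := hm
  letI : Algebra ℚ (R₀ ⧸ m) := Ideal.Quotient.algebra ℚ
  letI : Field (R₀ ⧸ m) := Ideal.Quotient.field m
  haveI : Algebra.FiniteType ℚ (R₀ ⧸ m) :=
    Algebra.FiniteType.of_surjective (Ideal.Quotient.mkₐ ℚ m)
      (Ideal.Quotient.mkₐ_surjective ℚ m)
  haveI : Module.Finite ℚ (R₀ ⧸ m) := finite_of_finite_type_of_isJacobsonRing ℚ (R₀ ⧸ m)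
  haveI : Algebra.IsAlgebraic ℚ (R₀ ⧸ m) := Algebra.IsAlgebraic.of_finite ℚ (R₀ ⧸ m)
  haveI : Module.IsTorsionFree ℚ (R₀ ⧸ m) :=
    Module.isTorsionFree_iff_algebraMap_injective.mpr (algebraMap ℚ (R₀ ⧸ m)).injective
  -- embed the residue field into ℂ
  let emb : (R₀ ⧸ m) →ₐ[ℚ] ℂ := IsAlgClosed.lift
  let φ : R₀ →+* ℂ := emb.toRingHom.comp (Ideal.Quotient.mk m)
  -- the element with coefficients in `R₀`
  let t₀ : MonoidAlgebra R₀ G :=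
    MonoidAlgebra.ofCoeff ⟨t.coeff.support, fun g => ⟨t.coeff g, hmem g⟩, by
      intro a
      rw [Finsupp.mem_support_iff]
      constructor
      · intro h h'
        exact h (by simpa [Subtype.ext_iff] using h')
      · intro h h'
        exact h (Subtype.ext (by simpa using h'))⟩
  have ht₀_apply : ∀ g : G, (t₀.coeff g : F) = t.coeff g := fun g => rfl
  -- the inclusion into F
  let ι : R₀ →+* F := R₀.toSubring.subtype
  have hιt₀ : mapCoeff ι t₀ = t := by
    ext g; rw [mapCoeff_apply]; exact ht₀_apply g
  have ht₀sq : t₀ * t₀ = 0 := by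
    apply mapCoeff_injective ι Subtype.val_injective
    rw [mapCoeff_mul, hιt₀, h2, mapCoeff_zero]
  -- push to ℂ
  set z : MonoidAlgebra ℂ G := mapCoeff φ t₀ with hz
  have hzsq : z * z = 0 := by rw [hz, ← mapCoeff_mul, ht₀sq, mapCoeff_zero]
  have hzne : z ≠ 0 := by
    intro h
    have h1 : φ (t₀.coeff g₀) = 0 := by
      have := congrArg (fun u : MonoidAlgebra ℂ G => u.coeff g₀) h
      simpa [hz, mapCoeff_apply] using this
    have hunit : (t₀.coeff g₀ : R₀) * ⟨(t.coeff g₀)⁻¹, hinvmem⟩ = 1 :=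
      Subtype.ext (by simp [ht₀_apply, mul_inv_cancel₀ hg₀'])
    have := congrArg φ hunit
    rw [map_mul, map_one, h1, zero_mul] at this
    exact zero_ne_one this
  have hzc : z ∈ Subring.center (MonoidAlgebra ℂ G) := by
    rw [central_iff]
    intro h g
    have hinv := (central_iff t).mp ht h g
    rw [hz, mapCoeff_apply, mapCoeff_apply]
    congr 1
    exact Subtype.ext (by rw [ht₀_apply, ht₀_apply, hinv])
  exact hzne (complex_central_sq z hzc hzsq)

end CharZero

section Main
variable {F : Type*} [Field F] [CharZero F] {G : Type*} [Group G]

lemma ce_to_comm (hCE : IsCentrallyEssential (MonoidAlgebra F G)) :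
    ∀ a b : MonoidAlgebra F G, a * b = b * a := by
  intro a b
  by_contra hab
  have hx : a * b - b * a ≠ 0 := sub_ne_zero.mpr hab
  set x := a * b - b * a with hxdef
  obtain ⟨d, hdC, hdx0, hdxC⟩ := hCE x hx
  obtain ⟨c, hcC, htC, ht0, htaC⟩ :
      ∃ c : MonoidAlgebra F G, c ∈ Subring.center (MonoidAlgebra F G) ∧
        c * x ∈ Subring.center (MonoidAlgebra F G) ∧
        c * x ≠ 0 ∧ (c * x) * a ∈ Subring.center (MonoidAlgebra F G) := by
    rcases eq_or_ne (d * x * a) 0 with h0 | h0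
    · exact ⟨d, hdC, hdxC, hdx0, by rw [h0]; exact zero_mem _⟩
    · obtain ⟨e, heC, he0, heC'⟩ := hCE (d * x * a) h0
      refine ⟨e * d, Subring.mul_mem _ heC hdC, ?_, ?_, ?_⟩
      · rw [mul_assoc]; exact Subring.mul_mem _ heC hdxC
      · intro h
        exact he0 (by rw [← mul_assoc, ← mul_assoc, h, zero_mul])
      · rw [mul_assoc, mul_assoc, ← mul_assoc d x a]
        exact heC'
  have htx : (c * x) * x = 0 := by
    have h1 : ((c * x) * a) * b = b * ((c * x) * a) := (Subring.mem_center_iff.mp htaC b).symm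
    have h2 : b * (c * x) = (c * x) * b := Subring.mem_center_iff.mp htC b
    have key : (c * x) * (a * b) = (c * x) * (b * a) :=
      calc (c * x) * (a * b) = ((c * x) * a) * b := (mul_assoc _ a b).symm
      _ = b * ((c * x) * a) := h1
      _ = (b * (c * x)) * a := (mul_assoc b _ a).symm
      _ = ((c * x) * b) * a := by rw [h2]
      _ = (c * x) * (b * a) := mul_assoc _ b a
    show (c * x) * (a * b - b * a) = 0
    rw [mul_sub, key, sub_self]
  have htt : (c * x) * (c * x) = 0 := by
    have hxc : x * c = c * x := Subring.mem_center_iff.mp hcC x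
    calc (c * x) * (c * x) = c * ((x * c) * x) := by rw [mul_assoc, ← mul_assoc x c x]
    _ = c * ((c * x) * x) := by rw [hxc]
    _ = 0 := by rw [htx, mul_zero]
  exact ht0 (central_sq_eq_zero _ htC htt)

lemma comm_to_ce {R : Type*} [Ring R] (h : ∀ a b : R, a * b = b * a) :
    IsCentrallyEssential R := by
  intro r hr
  exact ⟨1, Subring.one_mem _, by rwa [one_mul],
    by rw [one_mul]; exact Subring.mem_center_iff.mpr fun g => h g r⟩

lemma ring_comm_to_group_comm (h : ∀ x y : MonoidAlgebra F G, x * y = y * x) :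
    ∀ a b : G, a * b = b * a := by
  intro a b
  have hs := h (MonoidAlgebra.single a (1 : F)) (MonoidAlgebra.single b (1 : F))
  rw [MonoidAlgebra.single_mul_single, MonoidAlgebra.single_mul_single, mul_one] at hs
  rcases MonoidAlgebra.single_inj.mp hs with ⟨h1, _⟩ | ⟨h1, _⟩
  · exact h1
  · exact absurd h1 one_ne_zero

lemma group_comm_to_ring_comm (h : ∀ a b : G, a * b = b * a) :
    ∀ x y : MonoidAlgebra F G, x * y = y * x := by
  intro x y
  induction x using MonoidAlgebra.induction_linear with
  | zero => simp
  | add f g hf hg => rw [add_mul, mul_add, hf, hg]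
  | single a r =>
    induction y using MonoidAlgebra.induction_linear with
    | zero => simp
    | add f g hf hg => rw [add_mul, mul_add, hf, hg]
    | single b s =>
      rw [MonoidAlgebra.single_mul_single, MonoidAlgebra.single_mul_single, h a b, mul_comm]

end Main

theorem centrally_essential_char_zero_iff_commutative
    (F : Type*) [Field F] [CharZero F] (G : Type*) [Group G] :
    (IsCentrallyEssential (MonoidAlgebra F G) ↔
      ∀ x y : MonoidAlgebra F G, x * y = y * x) ∧
    (IsCentrallyEssential (MonoidAlgebra F G) ↔ ∀ a b : G, a * b = b * a) := by
  refine ⟨⟨ce_to_comm, comm_to_ce⟩,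
    ⟨fun h => ring_comm_to_group_comm (ce_to_comm h),
     fun h => comm_to_ce (group_comm_to_ring_comm h)⟩⟩
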